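/- (Elastic duality) For λ > 0, strictly positive prior b ∈ Δ^N, and the primal problem min over w ∈ Δ^N of KL(w‖b) + (λ/2)‖Xᵀw − t‖², the unique primal optimizer is the exponential tilt w_i ∝ b_i e^{θ*ᵀx_i}, where θ* is the unique maximizer of L_el(θ) = θᵀt − log ∑_i b_i e^{θᵀx_i} − ‖θ‖²/(2λ); moreover θ* satisfies θ* = λ(t − Xᵀw(θ*)). -/

import Mathlib

open Finset
open scoped RealInnerProductSpace


lemma gibbs_aux {N : ℕ} (w p : Fin N → ℝ) (hw : ∀ i, 0 ≤ w i) (hp : ∀ i, 0 < p i)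
    (hs : ∑ i, w i = ∑ i, p i) :
    0 ≤ ∑ i, w i * Real.log (w i / p i) ∧
      ((∑ i, w i * Real.log (w i / p i)) = 0 → w = p) := by
  set g : Fin N → ℝ := fun i => p i - w i - w i * Real.log (p i / w i) with hg
  have hterm : ∀ i, w i * Real.log (w i / p i) = g i - (p i - w i) := by
    intro i
    rcases eq_or_lt_of_le (hw i) with h0 | h0
    · simp [hg, ← h0]
    · have : Real.log (w i / p i) = - Real.log (p i / w i) := by
        rw [← Real.log_inv]; congr 1; field_simp
      simp only [hg, this]; ring
  have hgnn : ∀ i, 0 ≤ g i := by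
    intro i
    rcases eq_or_lt_of_le (hw i) with h0 | h0
    · simp [hg, ← h0]; exact (hp i).le
    · have hr : 0 < p i / w i := div_pos (hp i) h0
      have hlog := Real.log_le_sub_one_of_pos hr
      have hpw : p i - w i = w i * (p i / w i - 1) := by field_simp
      simp only [hg]
      nlinarith [mul_le_mul_of_nonneg_left hlog (hw i)]
  have hzero : ∑ i, (p i - w i) = 0 := by
    rw [Finset.sum_sub_distrib, hs]; ring
  have hsum : ∑ i, w i * Real.log (w i / p i) = ∑ i, g i := by
    rw [Finset.sum_congr rfl fun i _ => hterm i, Finset.sum_sub_distrib, hzero]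
    ring
  constructor
  · rw [hsum]; exact Finset.sum_nonneg fun i _ => hgnn i
  · intro h0
    have hz : ∀ i ∈ Finset.univ, g i = 0 := by
      rw [hsum] at h0
      exact (Finset.sum_eq_zero_iff_of_nonneg fun i _ => hgnn i).1 h0
    funext i
    have hgi := hz i (Finset.mem_univ i)
    rcases eq_or_lt_of_le (hw i) with hw0 | hw0
    · exfalso
      have : g i = p i := by simp [hg, ← hw0]
      exact (hp i).ne' (by rw [← this, hgi])
    · by_contra hne
      have hr : 0 < p i / w i := div_pos (hp i) hw0
      have hrne : p i / w i ≠ 1 := fun h1 =>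
        hne ((div_eq_one_iff_eq (ne_of_gt hw0)).1 h1).symm
      have hlt := Real.log_lt_sub_one_of_pos hr hrne
      have hpw : p i - w i = w i * (p i / w i - 1) := by field_simp
      have : 0 < g i := by
        simp only [hg]
        nlinarith [mul_lt_mul_of_pos_left hlt hw0]
      linarith [hgi]


lemma duality_identity {N K : ℕ} (b : Fin N → ℝ) (hb : ∀ i, 0 < b i)
    (x : Fin N → EuclideanSpace ℝ (Fin K)) (t : EuclideanSpace ℝ (Fin K))
    (lam : ℝ) (hlam : 0 < lam)
    (w : Fin N → ℝ) (hw : ∀ i, 0 ≤ w i) (hw1 : ∑ i, w i = 1)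
    (θ : EuclideanSpace ℝ (Fin K)) :
    ((∑ i, w i * Real.log (w i / b i)) + lam / 2 * ‖(∑ i, w i • x i) - t‖ ^ 2)
      - (⟪θ, t⟫ - Real.log (∑ i, b i * Real.exp ⟪θ, x i⟫) - ‖θ‖ ^ 2 / (2 * lam))
    = (∑ i, w i * Real.log (w i /
        (b i * Real.exp ⟪θ, x i⟫ / ∑ j, b j * Real.exp ⟪θ, x j⟫)))
      + ‖θ + lam • ((∑ i, w i • x i) - t)‖ ^ 2 / (2 * lam) := by
  set Z : ℝ := ∑ j, b j * Real.exp ⟪θ, x j⟫ with hZdef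
  set S : EuclideanSpace ℝ (Fin K) := ∑ i, w i • x i with hSdef
  have hNne : (Finset.univ : Finset (Fin N)).Nonempty := by
    by_contra h
    rw [Finset.not_nonempty_iff_eq_empty] at h
    rw [h] at hw1; simp at hw1
  have hZpos : 0 < Z :=
    Finset.sum_pos (fun j _ => mul_pos (hb j) (Real.exp_pos _)) hNne
  have hterm : ∀ i, w i * Real.log (w i / (b i * Real.exp ⟪θ, x i⟫ / Z))
      = w i * Real.log (w i / b i) - w i * ⟪θ, x i⟫ + w i * Real.log Z := by
    intro i
    rcases eq_or_lt_of_le (hw i) with h0 | h0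
    · simp [← h0]
    · have hbe : (0:ℝ) < b i * Real.exp ⟪θ, x i⟫ := mul_pos (hb i) (Real.exp_pos _)
      have h1 : w i / (b i * Real.exp ⟪θ, x i⟫ / Z)
          = (w i / b i) / Real.exp ⟪θ, x i⟫ * Z := by
        field_simp
      rw [h1, Real.log_mul (div_pos (div_pos h0 (hb i)) (Real.exp_pos _)).ne' hZpos.ne',
        Real.log_div (div_pos h0 (hb i)).ne' (Real.exp_ne_zero _), Real.log_exp]
      ring
  have hsum1 : ∑ i, w i * Real.log (w i / (b i * Real.exp ⟪θ, x i⟫ / Z))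
      = (∑ i, w i * Real.log (w i / b i)) - ⟪θ, S⟫ + Real.log Z := by
    rw [Finset.sum_congr rfl fun i _ => hterm i]
    rw [Finset.sum_add_distrib, Finset.sum_sub_distrib, ← Finset.sum_mul, hw1,
      hSdef, inner_sum]
    simp only [real_inner_smul_right]
    ring
  have hnorm : ‖θ + lam • (S - t)‖ ^ 2
      = ‖θ‖ ^ 2 + 2 * lam * (⟪θ, S⟫ - ⟪θ, t⟫) + lam ^ 2 * ‖S - t‖ ^ 2 := by
    rw [norm_add_sq_real, real_inner_smul_right, inner_sub_right, norm_smul]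
    rw [mul_pow, Real.norm_eq_abs, sq_abs]
    ring
  rw [hsum1, hnorm]
  field_simp
  ring


lemma fixed_point_aux {N K : ℕ} (b : Fin N → ℝ) (hb : ∀ i, 0 < b i)
    (x : Fin N → EuclideanSpace ℝ (Fin K)) (t : EuclideanSpace ℝ (Fin K))
    (lam : ℝ) (hlam : 0 < lam) (hNne : (Finset.univ : Finset (Fin N)).Nonempty)
    (θs : EuclideanSpace ℝ (Fin K))
    (hmax : IsMaxOn (fun θ => ⟪θ, t⟫ - Real.log (∑ i, b i * Real.exp ⟪θ, x i⟫) -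
        ‖θ‖ ^ 2 / (2 * lam)) Set.univ θs) :
    θs = lam • (t - ∑ i, (b i * Real.exp ⟪θs, x i⟫ / ∑ j, b j * Real.exp ⟪θs, x j⟫) • x i) := by
  set A : Fin N → ℝ := fun i => ⟪θs, x i⟫ with hA
  set Z : ℝ := ∑ j, b j * Real.exp (A j) with hZ
  have hZpos : 0 < Z :=
    Finset.sum_pos (fun j _ => mul_pos (hb j) (Real.exp_pos _)) hNne
  set μ : EuclideanSpace ℝ (Fin K) := ∑ i, (b i * Real.exp (A i) / Z) • x i with hμ
  -- main claim: the gradient direction vanishes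
  have hgrad : ∀ v : EuclideanSpace ℝ (Fin K), ⟪v, t - μ - (1 / lam) • θs⟫ = 0 := by
    intro v
    set B : Fin N → ℝ := fun i => ⟪v, x i⟫ with hB
    set φ : ℝ → ℝ := fun s =>
      (⟪θs, t⟫ + s * ⟪v, t⟫) - Real.log (∑ i, b i * Real.exp (A i + s * B i)) -
        (‖θs‖ ^ 2 + s * (2 * ⟪θs, v⟫) + s ^ 2 * ‖v‖ ^ 2) / (2 * lam) with hφ
    have hφeq : ∀ s : ℝ, φ s = ⟪θs + s • v, t⟫ -
        Real.log (∑ i, b i * Real.exp ⟪θs + s • v, x i⟫) - ‖θs + s • v‖ ^ 2 / (2 * lam) := by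
      intro s
      have e1 : ∀ y : EuclideanSpace ℝ (Fin K), ⟪θs + s • v, y⟫ = ⟪θs, y⟫ + s * ⟪v, y⟫ := by
        intro y; rw [inner_add_left, real_inner_smul_left]
      have e2 : ‖θs + s • v‖ ^ 2 = ‖θs‖ ^ 2 + s * (2 * ⟪θs, v⟫) + s ^ 2 * ‖v‖ ^ 2 := by
        rw [norm_add_sq_real, real_inner_smul_right, norm_smul, mul_pow,
          Real.norm_eq_abs, sq_abs]
        ring
      simp only [hφ, e1, e2, hA, hB]
    -- local max at 0
    have hlocmax : IsLocalMax φ 0 := by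
      apply Filter.Eventually.mono (Filter.univ_mem)
      intro s _
      rw [hφeq s, hφeq 0]
      simp only [zero_smul, add_zero]
      exact hmax (Set.mem_univ (θs + s • v))
    -- derivative
    have hZ0 : (∑ i, b i * Real.exp (A i + 0 * B i)) = Z := by
      simp [hZ]
    have hder2 : HasDerivAt (fun s : ℝ => ∑ i, b i * Real.exp (A i + s * B i))
        (∑ i, b i * (Real.exp (A i + 0 * B i) * B i)) 0 := by
      apply HasDerivAt.fun_sum
      intro i _
      exact (((hasDerivAt_mul_const (B i)).const_add (A i)).exp).const_mul (b i)
    have hder1 : HasDerivAt (fun s : ℝ => ⟪θs, t⟫ + s * ⟪v, t⟫) ⟪v, t⟫ 0 :=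
      (hasDerivAt_mul_const ⟪v, t⟫).const_add _
    have hder3 : HasDerivAt (fun s : ℝ =>
        (‖θs‖ ^ 2 + s * (2 * ⟪θs, v⟫) + s ^ 2 * ‖v‖ ^ 2) / (2 * lam))
        ((2 * ⟪θs, v⟫ + (↑2 * 0 ^ 1) * ‖v‖ ^ 2) / (2 * lam)) 0 := by
      exact ((((hasDerivAt_mul_const (2 * ⟪θs, v⟫)).const_add (‖θs‖ ^ 2)).add
        ((hasDerivAt_pow 2 0).mul_const (‖v‖ ^ 2))).div_const (2 * lam))
    have hderlog : HasDerivAt (fun s : ℝ => Real.log (∑ i, b i * Real.exp (A i + s * B i)))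
        ((∑ i, b i * (Real.exp (A i + 0 * B i) * B i)) / Z) 0 := by
      have := hder2.log (by rw [hZ0]; exact hZpos.ne')
      rwa [hZ0] at this
    have hderφ : HasDerivAt φ
        (⟪v, t⟫ - (∑ i, b i * (Real.exp (A i + 0 * B i) * B i)) / Z -
          (2 * ⟪θs, v⟫ + (↑2 * 0 ^ 1) * ‖v‖ ^ 2) / (2 * lam)) 0 :=
      (hder1.sub hderlog).sub hder3
    have hD0 := hlocmax.hasDerivAt_eq_zero hderφ
    -- translate
    have hsum : (∑ i, b i * (Real.exp (A i + 0 * B i) * B i)) / Z = ⟪v, μ⟫ := by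
      rw [hμ, inner_sum]
      rw [Finset.sum_div]
      apply Finset.sum_congr rfl
      intro i _
      rw [real_inner_smul_right]
      simp [hB]
      ring
    rw [hsum] at hD0
    have h2 : (2 * ⟪θs, v⟫ + (2:ℝ) * 0 ^ 1 * ‖v‖ ^ 2) / (2 * lam) = 1 / lam * ⟪θs, v⟫ := by
      field_simp; ring
    rw [h2] at hD0
    rw [real_inner_comm v θs] at hD0
    rw [inner_sub_right, inner_sub_right, real_inner_smul_right]
    linarith [hD0]
  have hc := hgrad (t - μ - (1 / lam) • θs)
  rw [inner_self_eq_zero, sub_eq_zero] at hc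
  rw [hc, smul_smul]
  have : lam * (1 / lam) = 1 := by field_simp
  rw [this, one_smul]


lemma exists_max_aux {N K : ℕ} (b : Fin N → ℝ) (hb : ∀ i, 0 < b i)
    (x : Fin N → EuclideanSpace ℝ (Fin K)) (t : EuclideanSpace ℝ (Fin K))
    (lam : ℝ) (hlam : 0 < lam) (hNne : (Finset.univ : Finset (Fin N)).Nonempty) :
    ∃ θs, IsMaxOn (fun θ : EuclideanSpace ℝ (Fin K) =>
      ⟪θ, t⟫ - Real.log (∑ i, b i * Real.exp ⟪θ, x i⟫) -
        ‖θ‖ ^ 2 / (2 * lam)) Set.univ θs := by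
  set Lel : EuclideanSpace ℝ (Fin K) → ℝ := fun θ =>
    ⟪θ, t⟫ - Real.log (∑ i, b i * Real.exp ⟪θ, x i⟫) - ‖θ‖ ^ 2 / (2 * lam) with hLel
  obtain ⟨i0, -⟩ := hNne
  have hZpos : ∀ θ : EuclideanSpace ℝ (Fin K), 0 < ∑ i, b i * Real.exp ⟪θ, x i⟫ :=
    fun θ => Finset.sum_pos (fun j _ => mul_pos (hb j) (Real.exp_pos _)) ⟨i0, Finset.mem_univ i0⟩
  have hcont : Continuous Lel := by
    apply Continuous.sub
    apply Continuous.sub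
    · exact continuous_id.inner continuous_const
    · apply Continuous.log
      · exact continuous_finset_sum _ (fun i _ =>
          continuous_const.mul (Real.continuous_exp.comp (continuous_id.inner continuous_const)))
      · exact fun θ => (hZpos θ).ne'
    · exact (continuous_norm.pow 2).div_const _
  obtain ⟨C, Cp, hCp0, hub⟩ : ∃ C Cp : ℝ, 0 ≤ Cp ∧
      ∀ θ : EuclideanSpace ℝ (Fin K), Lel θ ≤ C + Cp * ‖θ‖ - ‖θ‖ ^ 2 / (2 * lam) := by
    refine ⟨-Real.log (b i0), ‖t‖ + ‖x i0‖,
      add_nonneg (norm_nonneg _) (norm_nonneg _), fun θ => ?_⟩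
    have h1 : ⟪θ, t⟫ ≤ ‖θ‖ * ‖t‖ := real_inner_le_norm θ t
    have h2 : b i0 * Real.exp ⟪θ, x i0⟫ ≤ ∑ i, b i * Real.exp ⟪θ, x i⟫ :=
      Finset.single_le_sum (f := fun i => b i * Real.exp ⟪θ, x i⟫)
        (fun j _ => (mul_pos (hb j) (Real.exp_pos _)).le) (Finset.mem_univ i0)
    have h3 : Real.log (b i0 * Real.exp ⟪θ, x i0⟫) ≤ Real.log (∑ i, b i * Real.exp ⟪θ, x i⟫) :=
      Real.log_le_log (mul_pos (hb i0) (Real.exp_pos _)) h2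
    have h4 : Real.log (b i0 * Real.exp ⟪θ, x i0⟫) = Real.log (b i0) + ⟪θ, x i0⟫ := by
      rw [Real.log_mul (hb i0).ne' (Real.exp_ne_zero _), Real.log_exp]
    have h5 : -⟪θ, x i0⟫ ≤ ‖θ‖ * ‖x i0‖ := by
      have ha := abs_real_inner_le_norm θ (x i0)
      have hb' := neg_abs_le (⟪θ, x i0⟫ : ℝ)
      linarith
    simp only [hLel]
    nlinarith [h1, h3, h4, h5]
  clear hLel
  clear_value Lel
  obtain ⟨R, hR1, hfar⟩ : ∃ R : ℝ, 1 ≤ R ∧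
      ∀ θ : EuclideanSpace ℝ (Fin K), R ≤ ‖θ‖ → Lel θ < Lel 0 := by
    refine ⟨max 1 (2 * lam * (Cp + |C - Lel 0| + 1)), le_max_left _ _, fun θ hθ => ?_⟩
    have hr1 : (1:ℝ) ≤ ‖θ‖ := le_trans (le_max_left _ _) hθ
    have hr2 : 2 * lam * (Cp + |C - Lel 0| + 1) ≤ ‖θ‖ := le_trans (le_max_right _ _) hθ
    have hr0 : (0:ℝ) ≤ ‖θ‖ := norm_nonneg _
    have habs : C - Lel 0 ≤ |C - Lel 0| := le_abs_self _
    have habs0 : (0:ℝ) ≤ |C - Lel 0| := abs_nonneg _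
    have hkey : Cp * ‖θ‖ + |C - Lel 0| + 1 ≤ ‖θ‖ ^ 2 / (2 * lam) := by
      rw [le_div_iff₀ (by positivity)]
      nlinarith [mul_le_mul_of_nonneg_left hr2 hr0,
        mul_le_mul_of_nonneg_left hr1 (mul_nonneg (by positivity : (0:ℝ) ≤ 2 * lam) habs0),
        mul_le_mul_of_nonneg_left hr1 (by positivity : (0:ℝ) ≤ 2 * lam)]
    have hu := hub θ
    linarith
  have hball : IsCompact (Metric.closedBall (0 : EuclideanSpace ℝ (Fin K)) R) :=
    isCompact_closedBall _ _
  have h0mem : (0 : EuclideanSpace ℝ (Fin K)) ∈ Metric.closedBall (0 : EuclideanSpace ℝ (Fin K)) R :=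
    Metric.mem_closedBall_self (le_trans zero_le_one hR1)
  obtain ⟨θs, hθsmem, hθsmax⟩ := hball.exists_isMaxOn ⟨0, h0mem⟩ hcont.continuousOn
  refine ⟨θs, ?_⟩
  rw [isMaxOn_iff]
  intro θ _
  by_cases hcase : ‖θ‖ ≤ R
  · exact (isMaxOn_iff.1 hθsmax) θ (by simpa [Metric.mem_closedBall, dist_zero_right] using hcase)
  · have h1 : Lel θ < Lel 0 := hfar θ (le_of_not_ge hcase)
    have h2 : Lel 0 ≤ Lel θs := (isMaxOn_iff.1 hθsmax) 0 h0mem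
    linarith

theorem elastic_duality
    {N K : ℕ} (b : Fin N → ℝ) (hb : ∀ i, 0 < b i) (hbsimplex : b ∈ stdSimplex ℝ (Fin N))
    (x : Fin N → EuclideanSpace ℝ (Fin K)) (t : EuclideanSpace ℝ (Fin K))
    (lam : ℝ) (hlam : 0 < lam) :
    let Lel : EuclideanSpace ℝ (Fin K) → ℝ :=
      fun θ => ⟪θ, t⟫ - Real.log (∑ i, b i * Real.exp ⟪θ, x i⟫) -
        ‖θ‖ ^ 2 / (2 * lam)
    let tilt : EuclideanSpace ℝ (Fin K) → Fin N → ℝ :=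
      fun θ i => b i * Real.exp ⟪θ, x i⟫ / ∑ j, b j * Real.exp ⟪θ, x j⟫
    let F : (Fin N → ℝ) → ℝ :=
      fun w => (∑ i, w i * Real.log (w i / b i)) +
        lam / 2 * ‖(∑ i, w i • x i) - t‖ ^ 2
    ∃ θstar : EuclideanSpace ℝ (Fin K),
      IsMaxOn Lel Set.univ θstar ∧
      (∀ θ', IsMaxOn Lel Set.univ θ' → θ' = θstar) ∧
      tilt θstar ∈ stdSimplex ℝ (Fin N) ∧
      IsMinOn F (stdSimplex ℝ (Fin N)) (tilt θstar) ∧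
      (∀ w ∈ stdSimplex ℝ (Fin N), F w = F (tilt θstar) → w = tilt θstar) ∧
      θstar = lam • (t - ∑ i, tilt θstar i • x i) := by
  intro Lel tilt F
  have hNne : (Finset.univ : Finset (Fin N)).Nonempty := by
    by_contra h
    rw [Finset.not_nonempty_iff_eq_empty] at h
    have := hbsimplex.2
    rw [h] at this; simp at this
  have hZpos : ∀ θ : EuclideanSpace ℝ (Fin K), 0 < ∑ j, b j * Real.exp ⟪θ, x j⟫ :=
    fun θ => Finset.sum_pos (fun j _ => mul_pos (hb j) (Real.exp_pos _)) hNne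
  have htiltpos : ∀ θ i, 0 < tilt θ i := fun θ i =>
    div_pos (mul_pos (hb i) (Real.exp_pos _)) (hZpos θ)
  have htiltsum : ∀ θ, ∑ i, tilt θ i = 1 := by
    intro θ
    show (∑ i, b i * Real.exp ⟪θ, x i⟫ / ∑ j, b j * Real.exp ⟪θ, x j⟫) = 1
    rw [← Finset.sum_div, div_self (hZpos θ).ne']
  have htiltmem : ∀ θ, tilt θ ∈ stdSimplex ℝ (Fin N) :=
    fun θ => ⟨fun i => (htiltpos θ i).le, htiltsum θ⟩
  -- the master identity
  have hident : ∀ w : Fin N → ℝ, (∀ i, 0 ≤ w i) → (∑ i, w i = 1) →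
      ∀ θ : EuclideanSpace ℝ (Fin K),
      F w - Lel θ = (∑ i, w i * Real.log (w i / tilt θ i)) +
        ‖θ + lam • ((∑ i, w i • x i) - t)‖ ^ 2 / (2 * lam) :=
    fun w hw hw1 θ => duality_identity b hb x t lam hlam w hw hw1 θ
  -- maximizer and fixed point
  obtain ⟨θstar, hmax⟩ := exists_max_aux b hb x t lam hlam hNne
  have hfix : θstar = lam • (t - ∑ i, tilt θstar i • x i) :=
    fixed_point_aux b hb x t lam hlam hNne θstar hmax
  -- strong duality value equality
  have hKL0 : (∑ i, tilt θstar i * Real.log (tilt θstar i / tilt θstar i)) = 0 := by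
    apply Finset.sum_eq_zero
    intro i _
    rw [div_self (htiltpos θstar i).ne', Real.log_one, mul_zero]
  have hmaxL : IsMaxOn Lel Set.univ θstar := hmax
  clear_value Lel tilt F
  clear hmax
  have hvanish : θstar + lam • ((∑ i, tilt θstar i • x i) - t) = 0 := by
    nth_rewrite 1 [hfix]
    rw [← smul_add, sub_add_sub_cancel, sub_self, smul_zero]
  have heq : F (tilt θstar) = Lel θstar := by
    have := hident (tilt θstar) (fun i => (htiltpos θstar i).le) (htiltsum θstar) θstar
    rw [hKL0, hvanish] at this
    simp at this
    linarith
  -- weak duality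
  have hweak : ∀ w : Fin N → ℝ, w ∈ stdSimplex ℝ (Fin N) →
      ∀ θ : EuclideanSpace ℝ (Fin K), Lel θ ≤ F w := by
    intro w hw θ
    have hKL := (gibbs_aux w (tilt θ) hw.1 (htiltpos θ)
      (by rw [hw.2, htiltsum θ])).1
    have hid := hident w hw.1 hw.2 θ
    have hpos : (0:ℝ) ≤ ‖θ + lam • ((∑ i, w i • x i) - t)‖ ^ 2 / (2 * lam) := by positivity
    linarith
  refine ⟨θstar, hmaxL, ?_, htiltmem θstar, ?_, ?_, hfix⟩
  · -- uniqueness of maximizer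
    intro θ' hmax'
    have h1 : Lel θ' = Lel θstar :=
      le_antisymm (hmaxL (Set.mem_univ θ')) (hmax' (Set.mem_univ θstar))
    have hid := hident (tilt θstar) (fun i => (htiltpos θstar i).le) (htiltsum θstar) θ'
    rw [heq, h1] at hid
    have hKL := (gibbs_aux (tilt θstar) (tilt θ') (fun i => (htiltpos θstar i).le)
      (htiltpos θ') (by rw [htiltsum, htiltsum])).1
    have hpos : (0:ℝ) ≤ ‖θ' + lam • ((∑ i, tilt θstar i • x i) - t)‖ ^ 2 / (2 * lam) := by
      positivity
    have hnz : ‖θ' + lam • ((∑ i, tilt θstar i • x i) - t)‖ ^ 2 / (2 * lam) = 0 := by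
      linarith
    have : θ' + lam • ((∑ i, tilt θstar i • x i) - t) = 0 := by
      rw [div_eq_zero_iff] at hnz
      rcases hnz with h | h
      · exact norm_eq_zero.1 ((pow_eq_zero_iff (two_ne_zero)).1 h)
      · exfalso; nlinarith
    have h2 : θ' = -(lam • ((∑ i, tilt θstar i • x i) - t)) := by
      rw [eq_neg_iff_add_eq_zero]; exact this
    rw [hfix, h2, ← smul_neg, neg_sub]
  · -- minimizer
    rw [isMinOn_iff]
    intro w hw
    rw [heq]
    exact hweak w hw θstar
  · -- uniqueness of minimizer
    intro w hw hFeq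
    have hid := hident w hw.1 hw.2 θstar
    rw [hFeq, heq] at hid
    have hg := gibbs_aux w (tilt θstar) hw.1 (htiltpos θstar) (by rw [hw.2, htiltsum θstar])
    have hpos : (0:ℝ) ≤ ‖θstar + lam • ((∑ i, w i • x i) - t)‖ ^ 2 / (2 * lam) := by positivity
    exact hg.2 (by linarith [hg.1])
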